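/- arXiv:1710.06106 — 6 statements merged into one kernel-verified Lean document; each statement's English description precedes it below -/
import Mathlib

section
/- Let X be a topological space, s an equivalence relation (setoid) on X whose natural map π : X → Quotient s is a closed map (i.e. the decomposition is upper semicontinuous), and G : X → X a map satisfying condition (*). If G is a closed map, then the induced map H : Quotient s → Quotient s, H ⟦x⟧ = ⟦G x⟧, is a closed map (with respect to the quotient topology). -/
/-- If the natural map `π : X → Quotient s` is closed (the
decomposition is usc), `G : X → X` satisfies condition (*) and is a closed map,
then the induced map `H` on the decomposition space (with the quotient
topology) is a closed map. -/
theorem stmt4 {X : Type*} [TopologicalSpace X] (s : Setoid X)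
    (hπ : IsClosedMap (Quotient.mk s : X → Quotient s))
    (G : X → X)
    (hstar : ∀ x : X, G '' {y | s.r y x} = {z | s.r z (G x)})
    (hG : IsClosedMap G)
    (H : Quotient s → Quotient s)
    (hH : ∀ x : X, H (Quotient.mk s x) = Quotient.mk s (G x)) :
    IsClosedMap H := by
  intro C hC
  have hsurj : Function.Surjective (Quotient.mk s : X → Quotient s) :=
    Quotient.mk_surjective
  have key : H '' C = Quotient.mk s '' (G '' ((Quotient.mk s : X → Quotient s) ⁻¹' C)) := by
    conv_lhs => rw [← Set.image_preimage_eq C hsurj]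
    rw [Set.image_image, Set.image_image]
    simp [hH]
  rw [key]
  exact hπ _ (hG _ (hC.preimage continuous_quotient_mk'))
end

section
/- Let X be a topological space, s an equivalence relation (setoid) on X, and G : X → X a map satisfying condition (*). If G is topologically transitive and its set of periodic points Per(G) is dense in X, then the induced map H : Quotient s → Quotient s, H ⟦x⟧ = ⟦G x⟧, is topologically transitive and its set of periodic points Per(H) is dense in the decomposition space Quotient s (with the quotient topology). -/
/-- If `G : X → X` satisfies condition (*), is topologically
transitive, and has a dense set of periodic points, then the induced map `H` on
the decomposition space (with the quotient topology) is topologically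
transitive and has a dense set of periodic points. -/
theorem stmt6 {X : Type*} [TopologicalSpace X] (s : Setoid X) (G : X → X)
    (hstar : ∀ x : X, G '' {y | s.r y x} = {z | s.r z (G x)})
    (H : Quotient s → Quotient s)
    (hH : ∀ x : X, H (Quotient.mk s x) = Quotient.mk s (G x))
    (hGtrans : ∀ U V : Set X, IsOpen U → IsOpen V → U.Nonempty → V.Nonempty →
      ∃ n > 0, (G^[n] '' U ∩ V).Nonempty)
    (hGper : Dense {x : X | ∃ n > 0, G^[n] x = x}) :
    (∀ U V : Set (Quotient s), IsOpen U → IsOpen V → U.Nonempty → V.Nonempty →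
      ∃ n > 0, (H^[n] '' U ∩ V).Nonempty) ∧
    Dense {q : Quotient s | ∃ n > 0, H^[n] q = q} := by
  have key : ∀ n : ℕ, ∀ x : X, H^[n] (Quotient.mk s x) = Quotient.mk s (G^[n] x) := by
    intro n
    induction n with
    | zero => intro x; simp
    | succ n ih =>
      intro x
      rw [Function.iterate_succ_apply, hH, ih, Function.iterate_succ_apply]
  have hcont : Continuous (Quotient.mk s) := continuous_quotient_mk'
  have hsurj : Function.Surjective (Quotient.mk s) := fun q => q.exists_rep
  constructor
  · intro U V hU hV hUne hVne
    obtain ⟨n, hn, x, ⟨y, hyU, hyx⟩, hxV⟩ :=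
      hGtrans (Quotient.mk s ⁻¹' U) (Quotient.mk s ⁻¹' V) (hU.preimage hcont)
        (hV.preimage hcont)
        (hUne.preimage hsurj) (hVne.preimage hsurj)
    exact ⟨n, hn, Quotient.mk s x, ⟨Quotient.mk s y, hyU, by rw [key, hyx]⟩, hxV⟩
  · have : Quotient.mk s '' {x : X | ∃ n > 0, G^[n] x = x} ⊆
        {q : Quotient s | ∃ n > 0, H^[n] q = q} := by
      rintro q ⟨x, ⟨n, hn, hx⟩, rfl⟩
      exact ⟨n, hn, by rw [key, hx]⟩
    exact Dense.mono this (hsurj.denseRange.dense_image hcont hGper)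
end

section
/- Let X be a compact metric space, s an equivalence relation (setoid) on X whose natural map π : X → Quotient s is a closed map (i.e. the decomposition is upper semicontinuous) and whose quotient Quotient s is infinite, and G : X → X a continuous surjective map satisfying condition (*) that is topologically transitive and has a dense set of periodic points. Then the induced map H : Quotient s → Quotient s, H ⟦x⟧ = ⟦G x⟧, is a continuous surjection that is topologically transitive, has a dense set of periodic points, and, for every metric on Quotient s inducing the quotient topology, is sensitive to initial conditions; i.e. H is chaotic on the decomposition space. -/
open Function Metric Set

theorem banks_sensitive {Y : Type*} [MetricSpace Y] [Infinite Y] (f : Y → Y)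
    (hf : Continuous f)
    (htrans : ∀ U V : Set Y, IsOpen U → IsOpen V → U.Nonempty → V.Nonempty →
      ∃ n > 0, (f^[n] '' U ∩ V).Nonempty)
    (hper : Dense {y : Y | ∃ n > 0, f^[n] y = y}) :
    ∃ η > 0, ∀ y : Y, ∀ ε > 0, ∃ z : Y,
      dist y z < ε ∧ ∃ n : ℕ, dist (f^[n] y) (f^[n] z) > η := by
  classical
  have : Nonempty Y := inferInstance
  obtain ⟨p, np, hnp, hp⟩ := hper.nonempty
  have hpP : Function.IsPeriodicPt f np p := hp
  -- there is a second periodic point with disjoint orbit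
  have hq : ∃ q, (∃ nq > 0, f^[nq] q = q) ∧ ∀ i j : ℕ, f^[i] p ≠ f^[j] q := by
    by_contra hcon
    push_neg at hcon
    have hsub : {y : Y | ∃ n > 0, f^[n] y = y} ⊆ Set.range (fun i => f^[i] p) := by
      rintro q ⟨nq, hnq, hqper⟩
      obtain ⟨i, j, hij⟩ := hcon q ⟨nq, hnq, hqper⟩
      refine ⟨(nq * (j + 1) - j) + i, ?_⟩
      have hle : j ≤ nq * (j + 1) := by nlinarith [hnq]
      have h1 : f^[nq * (j + 1) - j] (f^[j] q) = q := by
        rw [← Function.iterate_add_apply, Nat.sub_add_cancel hle]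
        exact (Function.IsPeriodicPt.mul_const hqper (j + 1))
      calc f^[(nq * (j + 1) - j) + i] p = f^[nq * (j + 1) - j] (f^[i] p) := by
              rw [Function.iterate_add_apply]
        _ = f^[nq * (j + 1) - j] (f^[j] q) := by rw [hij]
        _ = q := h1
    have hfin : (Set.range fun i => f^[i] p).Finite := by
      refine Set.Finite.subset ((Set.finite_Iio np).image fun i => f^[i] p) ?_
      rintro _ ⟨i, rfl⟩
      exact ⟨i % np, Nat.mod_lt _ hnp, hpP.iterate_mod_apply i⟩
    have hdense : Dense (Set.range fun i => f^[i] p) := hper.mono hsub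
    have : (Set.range fun i => f^[i] p) = Set.univ := by
      rw [← hdense.closure_eq, hfin.isClosed.closure_eq]
    exact Set.infinite_univ (this ▸ hfin)
  obtain ⟨q, ⟨nq, hnq, hqq⟩, hdisj⟩ := hq
  have hqP : Function.IsPeriodicPt f nq q := hqq
  -- the two (finite) orbits
  set Op : Finset Y := (Finset.range np).image fun i => f^[i] p with hOp
  set Oq : Finset Y := (Finset.range nq).image fun i => f^[i] q with hOq
  have hOpne : Op.Nonempty := ⟨p, Finset.mem_image.mpr ⟨0, Finset.mem_range.mpr hnp, rfl⟩⟩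
  have hOqne : Oq.Nonempty := ⟨q, Finset.mem_image.mpr ⟨0, Finset.mem_range.mpr hnq, rfl⟩⟩
  have hPne : (Op ×ˢ Oq).Nonempty := hOpne.product hOqne
  set c : ℝ := (Op ×ˢ Oq).inf' hPne (fun ab => dist ab.1 ab.2) with hc
  have hcpos : 0 < c := by
    rw [hc]
    refine (Finset.lt_inf'_iff hPne).mpr ?_
    rintro ⟨a, b⟩ hab
    obtain ⟨ha, hb⟩ := Finset.mem_product.mp hab
    obtain ⟨i, _, rfl⟩ := Finset.mem_image.mp ha
    obtain ⟨j, _, rfl⟩ := Finset.mem_image.mp hb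
    exact dist_pos.mpr (hdisj i j)
  have hcle : ∀ i j : ℕ, c ≤ dist (f^[i] p) (f^[j] q) := by
    intro i j
    have hi : f^[i] p ∈ Op := Finset.mem_image.mpr
      ⟨i % np, Finset.mem_range.mpr (Nat.mod_lt _ hnp), hpP.iterate_mod_apply i⟩
    have hj : f^[j] q ∈ Oq := Finset.mem_image.mpr
      ⟨j % nq, Finset.mem_range.mpr (Nat.mod_lt _ hnq), hqP.iterate_mod_apply j⟩
    exact Finset.inf'_le (fun ab => dist ab.1 ab.2) (Finset.mk_mem_product hi hj)
  refine ⟨c / 8, by positivity, ?_⟩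
  intro x ε hε
  set ε' : ℝ := min ε (c / 8) with hε'def
  have hε' : 0 < ε' := lt_min hε (by positivity)
  -- periodic point close to x
  obtain ⟨p', ⟨n, hn, hp'⟩, hp'ball⟩ :=
    hper.exists_mem_open isOpen_ball (⟨x, mem_ball_self hε'⟩ : (ball x ε').Nonempty)
  have hp'P : Function.IsPeriodicPt f n p' := hp'
  -- an orbit far from x
  obtain ⟨q0, ⟨n0, hn0, hq0⟩, hfarx⟩ :
      ∃ q0 : Y, (∃ n0 > 0, f^[n0] q0 = q0) ∧ ∀ i, c / 2 ≤ dist x (f^[i] q0) := by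
    by_cases hc1 : ∀ i, c / 2 ≤ dist x (f^[i] q)
    · exact ⟨q, ⟨nq, hnq, hqq⟩, hc1⟩
    · push_neg at hc1
      obtain ⟨j, hj⟩ := hc1
      refine ⟨p, ⟨np, hnp, hp⟩, fun i => ?_⟩
      by_contra h
      push_neg at h
      have h1 : dist (f^[i] p) (f^[j] q) ≤ dist (f^[i] p) x + dist x (f^[j] q) :=
        dist_triangle _ _ _
      have h2 : dist (f^[i] p) x = dist x (f^[i] p) := dist_comm _ _
      have := hcle i j
      linarith
  -- the open set V around q0
  set V : Set Y := ⋂ i ∈ Finset.range (n + 1), f^[i] ⁻¹' ball (f^[i] q0) (c / 8) with hV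
  have hVopen : IsOpen V :=
    isOpen_biInter_finset fun i _ => isOpen_ball.preimage (hf.iterate i)
  have hVne : q0 ∈ V := Set.mem_iInter₂.mpr fun i _ => mem_ball_self (by positivity)
  obtain ⟨k, hk, w, ⟨z, hzU, rfl⟩, hzV⟩ :=
    htrans (ball x ε') V isOpen_ball hVopen ⟨x, mem_ball_self hε'⟩ ⟨q0, hVne⟩
  -- N = n * (k/n + 1)
  have hmod := Nat.div_add_mod k n
  have hmlt := Nat.mod_lt k hn
  have hNeq : n * (k / n + 1) = n * (k / n) + n := by ring
  set N : ℕ := n * (k / n + 1) with hNdef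
  have hkN : k < N ∧ N ≤ k + n := by omega
  set i : ℕ := N - k with hidef
  have hiN : i + k = N := by omega
  have hile : i < n + 1 := by omega
  have hzNear : dist (f^[N] z) (f^[i] q0) < c / 8 := by
    have h2 := Set.mem_iInter₂.mp hzV i (Finset.mem_range.mpr hile)
    have h3 : f^[i] (f^[k] z) ∈ ball (f^[i] q0) (c / 8) := h2
    rw [← Function.iterate_add_apply, hiN] at h3
    exact mem_ball.mp h3
  have hp'N : f^[N] p' = p' := Function.IsPeriodicPt.mul_const hp' (k / n + 1)
  have hxp' : dist x p' < ε' := by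
    have := mem_ball.mp hp'ball; rwa [dist_comm] at this
  have hxz : dist x z < ε' := by
    have := mem_ball.mp hzU; rwa [dist_comm] at this
  have hfar := hfarx i
  have htri1 : dist x (f^[i] q0) ≤ dist x p' + dist p' (f^[N] z) + dist (f^[N] z) (f^[i] q0) :=
    dist_triangle4 _ _ _ _
  have hεc : ε' ≤ c / 8 := min_le_right _ _
  have hbig : dist (f^[N] p') (f^[N] z) > c / 4 := by
    rw [hp'N]; linarith
  have htri2 : dist (f^[N] p') (f^[N] z) ≤ dist (f^[N] x) (f^[N] p') + dist (f^[N] x) (f^[N] z) :=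
    dist_triangle_left _ _ _
  by_cases hcase : dist (f^[N] x) (f^[N] p') > c / 8
  · exact ⟨p', lt_of_lt_of_le hxp' (min_le_left _ _), N, hcase⟩
  · push_neg at hcase
    refine ⟨z, lt_of_lt_of_le hxz (min_le_left _ _), N, ?_⟩
    linarith

/-- Let `X` be a compact metric space, `s` a setoid whose natural
map is closed (usc decomposition) and whose quotient is infinite, and
`G : X → X` a continuous surjection satisfying condition (*) which is
topologically transitive and has a dense set of periodic points. Then the
induced map `H` on the decomposition space is a continuous surjection which is
topologically transitive, has a dense set of periodic points, and is sensitive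
to initial conditions for any metric inducing the quotient topology; i.e. `H`
is chaotic on the decomposition space. -/
theorem stmt7 {X : Type*} [MetricSpace X] [CompactSpace X] (s : Setoid X)
    (hπ : IsClosedMap (Quotient.mk s : X → Quotient s))
    (hinf : Infinite (Quotient s))
    (G : X → X)
    (hGcont : Continuous G) (hGsurj : Function.Surjective G)
    (hstar : ∀ x : X, G '' {y | s.r y x} = {z | s.r z (G x)})
    (hGtrans : ∀ U V : Set X, IsOpen U → IsOpen V → U.Nonempty → V.Nonempty →
      ∃ n > 0, (G^[n] '' U ∩ V).Nonempty)
    (hGper : Dense {x : X | ∃ n > 0, G^[n] x = x})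
    (H : Quotient s → Quotient s)
    (hH : ∀ x : X, H (Quotient.mk s x) = Quotient.mk s (G x)) :
    Continuous H ∧ Function.Surjective H ∧
    (∀ U V : Set (Quotient s), IsOpen U → IsOpen V → U.Nonempty → V.Nonempty →
      ∃ n > 0, (H^[n] '' U ∩ V).Nonempty) ∧
    Dense {q : Quotient s | ∃ n > 0, H^[n] q = q} ∧
    (∀ m : MetricSpace (Quotient s),
      m.toUniformSpace.toTopologicalSpace
        = (instTopologicalSpaceQuotient : TopologicalSpace (Quotient s)) →
      ∃ η > 0, ∀ q : Quotient s, ∀ ε > 0, ∃ z : Quotient s,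
        m.toDist.dist q z < ε ∧ ∃ n : ℕ, m.toDist.dist (H^[n] q) (H^[n] z) > η) := by
  have hπcont : Continuous (Quotient.mk s) := continuous_quot_mk
  have hqm : Topology.IsQuotientMap (Quotient.mk s) := isQuotientMap_quot_mk
  have hπsurj : Function.Surjective (Quotient.mk s) := fun q =>
    Quotient.inductionOn q fun x => ⟨x, rfl⟩
  -- iterates commute
  have hHit : ∀ (n : ℕ) (x : X), H^[n] (Quotient.mk s x) = Quotient.mk s (G^[n] x) := by
    intro n
    induction n with
    | zero => intro x; simp
    | succ n ih =>
      intro x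
      rw [Function.iterate_succ_apply, Function.iterate_succ_apply, hH, ih]
  -- continuity
  have hHcont : Continuous H := by
    rw [hqm.continuous_iff]
    have : (H ∘ Quotient.mk s) = fun x => Quotient.mk s (G x) := funext fun x => hH x
    rw [this]
    exact hπcont.comp hGcont
  -- surjectivity
  have hHsurj : Function.Surjective H := by
    intro q
    obtain ⟨x, rfl⟩ := hπsurj q
    obtain ⟨y, rfl⟩ := hGsurj x
    exact ⟨Quotient.mk s y, hH y⟩
  -- transitivity
  have hHtrans : ∀ U V : Set (Quotient s), IsOpen U → IsOpen V → U.Nonempty → V.Nonempty →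
      ∃ n > 0, (H^[n] '' U ∩ V).Nonempty := by
    intro U V hU hV hUne hVne
    obtain ⟨u, hu⟩ := hUne
    obtain ⟨x, rfl⟩ := hπsurj u
    obtain ⟨v, hv⟩ := hVne
    obtain ⟨y, rfl⟩ := hπsurj v
    obtain ⟨n, hn, w, ⟨z, hzU, rfl⟩, hzV⟩ :=
      hGtrans (Quotient.mk s ⁻¹' U) (Quotient.mk s ⁻¹' V) (hU.preimage hπcont)
        (hV.preimage hπcont) ⟨x, hu⟩ ⟨y, hv⟩
    exact ⟨n, hn, H^[n] (Quotient.mk s z), ⟨Quotient.mk s z, hzU, rfl⟩,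
      by rw [hHit]; exact hzV⟩
  -- dense periodic points
  have hHper : Dense {q : Quotient s | ∃ n > 0, H^[n] q = q} := by
    have h1 : Quotient.mk s '' {x : X | ∃ n > 0, G^[n] x = x} ⊆
        {q : Quotient s | ∃ n > 0, H^[n] q = q} := by
      rintro _ ⟨x, ⟨n, hn, hx⟩, rfl⟩
      exact ⟨n, hn, by rw [hHit, hx]⟩
    exact (hπsurj.denseRange.dense_image hπcont hGper).mono h1
  refine ⟨hHcont, hHsurj, hHtrans, hHper, ?_⟩
  intro m hm
  have := @banks_sensitive (Quotient s) m hinf H ?_ ?_ ?_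
  · exact this
  · rw [hm]
    exact hHcont
  · intro U V hU hV hUne hVne
    rw [hm] at hU hV
    exact hHtrans U V hU hV hUne hVne
  · rw [hm]
    exact hHper
end

section
/- The map C : Σ → Σ defined by (C ψ)(i) = xor (ψ 0) (ψ (i+1)) is a continuous surjection of the symbolic space Σ that is not injective, is topologically transitive, and has a dense set of periodic points (hence C is chaotic on Σ). -/
/-- The map `C` on the symbolic space `Σ = ℕ → Bool`: the shift if the first
symbol is `0` (`false`), the bit-flipped shift if the first symbol is `1`
(`true`). -/
def Cmap : (ℕ → Bool) → (ℕ → Bool) := fun ψ i => xor (ψ 0) (ψ (i + 1))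

lemma Cmap_iter (k : ℕ) (ψ : ℕ → Bool) :
    Cmap^[k+1] ψ = fun i => xor (ψ k) (ψ (k+1+i)) := by
  induction k with
  | zero =>
    funext i
    show xor (ψ 0) (ψ (i+1)) = xor (ψ 0) (ψ (0+1+i))
    rw [show 0+1+i = i+1 by omega]
  | succ k ih =>
    funext i
    rw [Function.iterate_succ_apply', ih]
    show xor (xor (ψ k) (ψ (k+1+0))) (xor (ψ k) (ψ (k+1+(i+1)))) = _
    have h1 : k + 1 + 0 = k + 1 := by omega
    have h2 : k + 1 + (i + 1) = k + 1 + 1 + i := by omega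
    rw [h1, h2]
    cases ψ k <;> cases ψ (k+1) <;> simp

lemma cyl {U : Set (ℕ → Bool)} (hU : IsOpen U) {x : ℕ → Bool} (hx : x ∈ U) :
    ∃ N, ∀ ψ : ℕ → Bool, (∀ i < N, ψ i = x i) → ψ ∈ U := by
  obtain ⟨I, u, h1, h2⟩ := isOpen_pi_iff.1 hU x hx
  refine ⟨I.sup id + 1, fun ψ hψ => h2 ?_⟩
  intro i hi
  have : i < I.sup id + 1 := Nat.lt_succ_of_le (Finset.le_sup (f := id) hi)
  rw [hψ i this]
  exact (h1 i hi).2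

/-- `C` is a continuous surjection of the symbolic space
`ℕ → Bool` (with the product topology, `Bool` discrete) that is not injective,
is topologically transitive, and has a dense set of periodic points (hence `C`
is chaotic). -/
theorem stmt10 :
    Continuous Cmap ∧ Function.Surjective Cmap ∧ ¬ Function.Injective Cmap ∧
    (∀ U V : Set (ℕ → Bool), IsOpen U → IsOpen V → U.Nonempty → V.Nonempty →
      ∃ n > 0, (Cmap^[n] '' U ∩ V).Nonempty) ∧
    Dense {ψ : ℕ → Bool | ∃ n > 0, Cmap^[n] ψ = ψ} := by
  refine ⟨?_, ?_, ?_, ?_, ?_⟩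
  · -- continuity
    refine continuous_pi fun i => ?_
    have heq : (fun ψ : ℕ → Bool => Cmap ψ i) =
        (fun p : Bool × Bool => xor p.1 p.2) ∘ (fun ψ => (ψ 0, ψ (i+1))) := rfl
    rw [heq]
    exact Continuous.comp continuous_of_discreteTopology
      ((continuous_apply 0).prodMk (continuous_apply (i+1)))
  · -- surjectivity
    intro η
    refine ⟨fun j => Nat.rec false (fun i _ => η i) j, ?_⟩
    funext i
    simp [Cmap]
  · -- not injective
    intro h
    have : (fun _ : ℕ => false) = (fun _ : ℕ => true) := by
      apply h
      funext i
      simp [Cmap]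
    exact absurd (congrFun this 0) (by simp)
  · -- transitivity
    intro U V hU hV ⟨u, hu⟩ ⟨v, hv⟩
    obtain ⟨N, hN⟩ := cyl hU hu
    set ψ : ℕ → Bool := fun j => if j < N + 1 then u j else xor (u N) (v (j - (N+1))) with hψ
    have hC : Cmap^[N+1] ψ = v := by
      rw [Cmap_iter]
      funext i
      have hN1 : ψ N = u N := by simp [hψ]
      have hN2 : ψ (N+1+i) = xor (u N) (v i) := by
        have h1 : ¬ (N+1+i < N+1) := by omega
        have h2 : N+1+i - (N+1) = i := by omega
        simp [hψ, h1, h2]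
        exact fun h => absurd h (by omega)
      simp only [hN1, hN2]
      cases u N <;> simp
    refine ⟨N + 1, Nat.succ_pos N, v, ⟨ψ, hN ψ ?_, hC⟩, hv⟩
    intro i hi
    simp [hψ, Nat.lt_succ_of_lt hi]
    exact fun h => absurd h (by omega)
  · -- dense periodic points
    rw [dense_iff_inter_open]
    intro U hU ⟨x, hx⟩
    obtain ⟨N, hN⟩ := cyl hU hx
    set b : Bool := x N with hb
    set φ : ℕ → Bool := fun j => xor (x (j % (N+1))) (decide (j / (N+1) % 2 = 1) && b) with hφ
    have hlow : ∀ j, j < N + 1 → φ j = x j := by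
      intro j hj
      have h1 : j % (N+1) = j := Nat.mod_eq_of_lt hj
      have h2 : j / (N+1) = 0 := Nat.div_eq_of_lt hj
      simp [hφ, h1, h2]
    refine ⟨φ, hN φ (fun i hi => hlow i (Nat.lt_succ_of_lt hi)), ⟨N+1, Nat.succ_pos N, ?_⟩⟩
    rw [Cmap_iter]
    funext i
    have hφN : φ N = b := by rw [hlow N (Nat.lt_succ_self N), hb]
    have hmod : (N+1+i) % (N+1) = i % (N+1) := by
      rw [show N+1+i = i + (N+1) by omega, Nat.add_mod_right]
    have hdiv : (N+1+i) / (N+1) = i / (N+1) + 1 := by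
      rw [show N+1+i = i + (N+1) by omega, Nat.add_div_right _ (Nat.succ_pos N)]
    show xor (φ N) (φ (N+1+i)) = φ i
    rw [hφN]
    simp only [hφ, hmod, hdiv]
    set q := i / (N+1)
    rcases Nat.mod_two_eq_zero_or_one q with h | h
    · have h' : (q+1) % 2 = 1 := by omega
      rw [h, h']
      cases b <;> cases x (i % (N+1)) <;> simp
    · have h' : (q+1) % 2 = 0 := by omega
      rw [h, h']
      cases b <;> cases x (i % (N+1)) <;> simp
end

section
/- For every y ∈ [0,1], the image under C of the fiber f⁻¹({y}) equals the fiber f⁻¹({T y}): C '' (f⁻¹ {y}) = f⁻¹ {T y}. In particular, C maps every element of the fiber decomposition 𝒟_f = {f⁻¹({y}) | y ∈ [0,1]} of Σ onto an element of 𝒟_f, i.e. C satisfies condition (*) with respect to 𝒟_f. -/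
/-- The binary-expansion map `f : Σ → ℝ`, `f ψ = ∑_{i=0}^∞ ψ(i)/2^(i+1)`. -/
noncomputable def binExp (ψ : ℕ → Bool) : ℝ :=
  ∑' i : ℕ, (if ψ i then (1 : ℝ) else 0) / 2 ^ (i + 1)

/-- The tent map `T : ℝ → ℝ`. -/
noncomputable def tent (x : ℝ) : ℝ := if x ≤ 1 / 2 then 2 * x else 2 * (1 - x)

lemma summable_half : Summable (fun i : ℕ => (1 : ℝ) / 2 ^ (i + 1)) := by
  have h := summable_geometric_two.mul_left (1 / 2 : ℝ)
  refine h.congr fun i => ?_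
  rw [div_pow, one_pow, div_mul_div_comm, one_mul, pow_succ']

lemma binExp_summable (ψ : ℕ → Bool) :
    Summable (fun i => (if ψ i then (1 : ℝ) else 0) / 2 ^ (i + 1)) :=
  Summable.of_nonneg_of_le (fun i => by positivity)
    (fun i => by show (if ψ i then (1:ℝ) else 0) / 2 ^ (i+1) ≤ 1 / 2 ^ (i+1)
                 split
                 · exact le_rfl
                 · rw [zero_div]; positivity) summable_half

lemma tsum_half_pow : ∑' i : ℕ, (1 : ℝ) / 2 ^ (i + 1) = 1 := by
  have h := tsum_geometric_two' (1 : ℝ)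
  conv_rhs => rw [← h]
  congr 1 with n
  rw [pow_succ]
  ring

lemma binExp_nonneg (ψ : ℕ → Bool) : 0 ≤ binExp ψ :=
  tsum_nonneg (fun i => by positivity)

lemma binExp_le_one (ψ : ℕ → Bool) : binExp ψ ≤ 1 := by
  have h := Summable.tsum_le_tsum (f := fun i => (if ψ i then (1 : ℝ) else 0) / 2 ^ (i + 1))
    (g := fun i : ℕ => (1 : ℝ) / 2 ^ (i + 1))
    (fun i => by show (if ψ i then (1:ℝ) else 0) / 2 ^ (i+1) ≤ 1 / 2 ^ (i+1)
                 split
                 · exact le_rfl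
                 · rw [zero_div]; positivity) (binExp_summable ψ) summable_half
  rw [tsum_half_pow] at h
  exact h

/-- Prepending a bit to a symbolic sequence. -/
def bcons (b : Bool) (φ : ℕ → Bool) : ℕ → Bool := fun i =>
  match i with | 0 => b | n + 1 => φ n

lemma binExp_bcons (b : Bool) (φ : ℕ → Bool) :
    binExp (bcons b φ) = (if b then (1 : ℝ) / 2 else 0) + binExp φ / 2 := by
  rw [binExp, Summable.tsum_eq_zero_add (binExp_summable _)]
  congr 1
  · simp only [bcons]
    cases b <;> norm_num
  · rw [binExp, ← tsum_div_const]
    congr 1 with n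
    simp only [bcons]
    rw [pow_succ]
    rw [div_div]
    rfl

lemma binExp_not (φ : ℕ → Bool) : binExp (fun i => !φ i) = 1 - binExp φ := by
  have h : binExp (fun i => !φ i) + binExp φ = 1 := by
    rw [binExp, binExp, ← Summable.tsum_add (binExp_summable _) (binExp_summable _)]
    conv_rhs => rw [← tsum_half_pow]
    congr 1 with i
    cases hi : φ i <;> simp [hi]
  linarith

/-- for every `y ∈ [0,1]`, the image under `C` of the fiber
`f⁻¹({y})` equals the fiber `f⁻¹({T y})`; in particular `C` maps every element
of the fiber decomposition `𝒟_f` of the symbolic space onto an element of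
`𝒟_f`, i.e. `C` satisfies condition (*) with respect to `𝒟_f`. -/
theorem stmt14 :
    ∀ y ∈ Set.Icc (0 : ℝ) 1,
      Cmap '' (binExp ⁻¹' {y}) = binExp ⁻¹' {tent y} := by
  intro y hy
  ext φ
  simp only [Set.mem_image, Set.mem_preimage, Set.mem_singleton_iff]
  constructor
  · rintro ⟨ψ, hψ, rfl⟩
    subst hψ
    have hψc : ψ = bcons (ψ 0) (fun i => ψ (i + 1)) := by
      funext i; cases i <;> rfl
    have hsplit : binExp ψ
        = (if ψ 0 then (1 : ℝ) / 2 else 0) + binExp (fun i => ψ (i + 1)) / 2 := by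
      conv_lhs => rw [hψc]
      rw [binExp_bcons]
    have hs0 := binExp_nonneg (fun i => ψ (i + 1))
    have hs1 := binExp_le_one (fun i => ψ (i + 1))
    set s := binExp (fun i => ψ (i + 1)) with hs
    cases h0 : ψ 0 with
    | false =>
      rw [h0] at hsplit
      simp only [Bool.false_eq_true, if_false, zero_add] at hsplit
      have hC : Cmap ψ = fun i => ψ (i + 1) := by
        funext i; simp [Cmap, h0]
      rw [hC, ← hs, hsplit, tent, if_pos (by linarith)]
      ring
    | true =>
      rw [h0] at hsplit
      simp only [if_true] at hsplit
      have hC : Cmap ψ = fun i => !(ψ (i + 1)) := by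
        funext i; simp [Cmap, h0]
      rw [hC, binExp_not, ← hs, hsplit, tent]
      split_ifs with h <;> linarith
  · intro hφ
    by_cases hy2 : y ≤ 1 / 2
    · refine ⟨bcons false φ, ?_, ?_⟩
      · rw [binExp_bcons, hφ, tent, if_pos hy2]
        norm_num
      · funext i; simp [Cmap, bcons]
    · refine ⟨bcons true (fun i => !φ i), ?_, ?_⟩
      · rw [binExp_bcons, binExp_not, hφ, tent, if_neg hy2]
        norm_num
        ring
      · funext i; simp [Cmap, bcons]
end

section
/- Let X be a T₁ topological space with no isolated points (a perfect T₁-space), and let f : X → X be any map. If f has a dense orbit, i.e. there exists x₀ ∈ X such that the closure of O⁺(x₀) = {f^[n] x₀ | n ≥ 0} equals X, then f is topologically transitive. -/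
/-- in a T₁ space with no isolated points (a perfect T₁-space),
any map with a dense orbit is topologically transitive. -/
theorem stmt19 {X : Type*} [TopologicalSpace X] [T1Space X]
    (hperf : ∀ x : X, ¬ IsOpen ({x} : Set X))
    (f : X → X) (x₀ : X)
    (hdense : Dense (Set.range fun n : ℕ => f^[n] x₀)) :
    ∀ U V : Set X, IsOpen U → IsOpen V → U.Nonempty → V.Nonempty →
      ∃ n > 0, (f^[n] '' U ∩ V).Nonempty := by
  have hinf : ∀ W : Set X, IsOpen W → W.Nonempty → W.Infinite := by
    intro W hW ⟨w, hw⟩ hfin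
    apply hperf w
    have h1 : ({w} : Set X) = W \ (W \ {w}) := by
      ext y; simp only [Set.mem_diff, Set.mem_singleton_iff]
      constructor
      · rintro rfl; exact ⟨hw, fun h => h.2 rfl⟩
      · tauto
    rw [h1]
    exact hW.sdiff ((hfin.diff).isClosed)
  intro U V hU hV hUne hVne
  obtain ⟨y, hyU, m, hm⟩ := hdense.inter_open_nonempty U hU hUne
  have hF : (Set.image (fun j : ℕ => f^[j] x₀) (Set.Iic m)).Finite :=
    (Set.finite_Iic m).image _
  have hV' : (V \ Set.image (fun j : ℕ => f^[j] x₀) (Set.Iic m)).Nonempty :=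
    ((hinf V hV hVne).diff hF).nonempty
  have hV'open : IsOpen (V \ Set.image (fun j : ℕ => f^[j] x₀) (Set.Iic m)) :=
    hV.sdiff hF.isClosed
  obtain ⟨z, ⟨hzV, hznot⟩, k, hk⟩ := hdense.inter_open_nonempty _ hV'open hV'
  have hkm : m < k := by
    by_contra h
    exact hznot ⟨k, Set.mem_Iic.2 (le_of_not_gt h), hk⟩
  refine ⟨k - m, Nat.sub_pos_of_lt hkm, f^[k - m] y, ⟨y, hyU, rfl⟩, ?_⟩
  have : f^[k - m] y = f^[k] x₀ := by
    rw [← hm, ← Function.iterate_add_apply, Nat.sub_add_cancel hkm.le]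
  simp only [] at hk
  rw [this, hk]
  exact hzV
end
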